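/- Let a > 0, t0 = (a+1)/a, θ̃ = (a+1)^2/(a^2+3a+1), τ̃ = a(a+1)/(a^2+3a+1). Then 0 < 1−θ̃ < 1−τ̃ < θ̃ < 1, and the function y0 : ℝ → ℝ defined as the θ̃-periodic extension of y0(t) = t for t ∈ [0, 1−θ̃], y0(t) = −a(t − (1−θ̃)t0) for t ∈ [1−θ̃, 1−τ̃], y0(t) = t − θ̃ for t ∈ [1−τ̃, θ̃] is continuous, satisfies y0(t + θ̃) = y0(t) for all t ∈ ℝ, and for every t ∈ ℝ not of the form 1−θ̃ + kθ̃ or 1−τ̃ + kθ̃ with k ∈ ℤ, y0 is differentiable at t with y0′(t) = R(y0(t−1)). In particular the period θ̃ of this solution is strictly less than the delay 1. -/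

import Mathlib

/-- The relay nonlinearity: `R a x = 1` if `x ≤ 0`, and `R a x = -a` if `x > 0`. -/
noncomputable def R (a x : ℝ) : ℝ := if x ≤ 0 then 1 else -a

private lemma glueCO {f : ℝ → ℝ} {s t : Set ℝ} (hs : IsClosed s) (ht : IsClosed t)
    (hfs : ContinuousOn f s) (hft : ContinuousOn f t) : ContinuousOn f (s ∪ t) := by
  intro x hx
  have h1 : ContinuousWithinAt f s x := by
    by_cases h : x ∈ s
    · exact hfs x h
    · exact continuousWithinAt_of_notMem_closure (by rwa [hs.closure_eq])
  have h2 : ContinuousWithinAt f t x := by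
    by_cases h : x ∈ t
    · exact hft x h
    · exact continuousWithinAt_of_notMem_closure (by rwa [ht.closure_eq])
  exact h1.union h2

set_option maxHeartbeats 1000000 in
/-- for `a > 0`, `θ̃ = (a+1)^2/(a^2+3a+1)`, `τ̃ = a(a+1)/(a^2+3a+1)`,
one has `0 < 1-θ̃ < 1-τ̃ < θ̃ < 1`, and the `θ̃`-periodic extension `y0` of the
piecewise function `t` on `[0,1-θ̃]`, `-a(t-(1-θ̃)t0)` on `[1-θ̃,1-τ̃]`, `t-θ̃` on
`[1-τ̃,θ̃]` is continuous, `θ̃`-periodic, and away from the points `1-θ̃+kθ̃`,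
`1-τ̃+kθ̃` (`k ∈ ℤ`) it is differentiable with `y0'(t) = R (y0 (t-1))`; in
particular the period `θ̃` is strictly less than the delay `1`. -/
theorem stmt_6 (a : ℝ) (ha : 0 < a) (t0 θt τt : ℝ)
    (ht0 : t0 = (a + 1) / a)
    (hθt : θt = (a + 1) ^ 2 / (a ^ 2 + 3 * a + 1))
    (hτt : τt = a * (a + 1) / (a ^ 2 + 3 * a + 1))
    (y0 : ℝ → ℝ)
    (hy0per : ∀ t : ℝ, y0 (t + θt) = y0 t)
    (hy0a : ∀ t ∈ Set.Icc (0 : ℝ) (1 - θt), y0 t = t)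
    (hy0b : ∀ t ∈ Set.Icc (1 - θt) (1 - τt), y0 t = -a * (t - (1 - θt) * t0))
    (hy0c : ∀ t ∈ Set.Icc (1 - τt) θt, y0 t = t - θt) :
    (0 < 1 - θt ∧ 1 - θt < 1 - τt ∧ 1 - τt < θt ∧ θt < 1) ∧
    Continuous y0 ∧
    (∀ t : ℝ, y0 (t + θt) = y0 t) ∧
    (∀ t : ℝ, (∀ k : ℤ, t ≠ 1 - θt + (k : ℝ) * θt ∧ t ≠ 1 - τt + (k : ℝ) * θt) →
      HasDerivAt y0 (R a (y0 (t - 1))) t) ∧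
    θt < 1 := by
  have hD : 0 < a ^ 2 + 3 * a + 1 := by nlinarith
  have hDne : a ^ 2 + 3 * a + 1 ≠ 0 := ne_of_gt hD
  have hane : a ≠ 0 := ne_of_gt ha
  have e1 : 1 - θt = a / (a ^ 2 + 3 * a + 1) := by rw [hθt]; field_simp; ring
  have e2 : 1 - τt = (2 * a + 1) / (a ^ 2 + 3 * a + 1) := by rw [hτt]; field_simp; ring
  have e3 : (1 - θt) * t0 = (a + 1) / (a ^ 2 + 3 * a + 1) := by
    rw [e1, ht0]; field_simp
  have e4 : 2 * θt - 1 = (a ^ 2 + a + 1) / (a ^ 2 + 3 * a + 1) := by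
    rw [hθt]; field_simp; ring
  have e5 : θt - τt = (a + 1) / (a ^ 2 + 3 * a + 1) := by
    rw [hθt, hτt]; field_simp; ring
  have h1 : 0 < 1 - θt := by rw [e1]; positivity
  have h2 : 1 - θt < 1 - τt := by
    rw [e1, e2, div_lt_div_iff₀ hD hD]; nlinarith
  have h3 : 1 - τt < θt := by
    rw [e2, hθt, div_lt_div_iff₀ hD hD]; nlinarith
  have h4 : θt < 1 := by rw [hθt, div_lt_one hD]; nlinarith
  have hθpos : 0 < θt := by linarith
  -- 1-θt < 2θt-1
  have l0 : 1 - θt < 2 * θt - 1 := by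
    rw [e1, e4, div_lt_div_iff₀ hD hD]; nlinarith
  -- (1-θt)*t0 < 2θt-1
  have l1 : (1 - θt) * t0 < 2 * θt - 1 := by
    rw [e3, e4, div_lt_div_iff₀ hD hD]; nlinarith
  -- 1-θt < θt-τt
  have l2 : 1 - θt < θt - τt := by
    rw [e1, e5, div_lt_div_iff₀ hD hD]; nlinarith
  -- θt-τt = (1-θt)*t0
  have l3 : θt - τt = (1 - θt) * t0 := by rw [e5, e3]
  -- θt - τt ≤ 1 - τt (since θt < 1)
  have l4 : θt - τt < 1 - τt := by linarith
  -- integer shift invariance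
  have hper : Function.Periodic y0 θt := hy0per
  have hshift : ∀ (x : ℝ) (k : ℤ), y0 (x + (k : ℝ) * θt) = y0 x := by
    intro x k
    exact (hper.int_mul k) x
  -- extended piece a
  have hy0a' : ∀ x ∈ Set.Icc (1 - τt - θt) (1 - θt), y0 x = x := by
    intro x hx
    rcases le_or_gt 0 x with h | h
    · exact hy0a x ⟨h, hx.2⟩
    · have hx2 : x + θt ∈ Set.Icc (1 - τt) θt := ⟨by linarith [hx.1], by linarith⟩
      rw [← hy0per x, hy0c _ hx2]; ring
  -- extended piece c
  have hy0c' : ∀ x ∈ Set.Icc (1 - τt) 1, y0 x = x - θt := by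
    intro x hx
    rcases le_or_gt x θt with h | h
    · exact hy0c x ⟨hx.1, h⟩
    · have hm : x - θt ∈ Set.Icc (0 : ℝ) (1 - θt) := ⟨by linarith, by linarith [hx.2]⟩
      calc y0 x = y0 (x - θt + θt) := by ring_nf
        _ = y0 (x - θt) := hy0per _
        _ = x - θt := hy0a _ hm
  -- continuity on a big interval
  have locont : ContinuousOn y0 (Set.Icc (1 - τt - θt) 1) := by
    have hu : Set.Icc (1 - τt - θt) (1 : ℝ) =
        (Set.Icc (1 - τt - θt) (1 - θt) ∪ Set.Icc (1 - θt) (1 - τt)) ∪ Set.Icc (1 - τt) 1 := by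
      rw [Set.Icc_union_Icc_eq_Icc (by linarith) (by linarith),
        Set.Icc_union_Icc_eq_Icc (by linarith) (by linarith)]
    rw [hu]
    refine glueCO (IsClosed.union isClosed_Icc isClosed_Icc) isClosed_Icc
      (glueCO isClosed_Icc isClosed_Icc ?_ ?_) ?_
    · exact ContinuousOn.congr continuous_id.continuousOn (fun x hx => hy0a' x hx)
    · exact ContinuousOn.congr ((continuous_const.mul
        (continuous_id.sub continuous_const)).continuousOn) (fun x hx => hy0b x hx)
    · exact ContinuousOn.congr ((continuous_id.sub continuous_const).continuousOn)
        (fun x hx => hy0c' x hx)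
  have hctAt : ∀ s ∈ Set.Ico (0 : ℝ) θt, ContinuousAt y0 s := by
    intro s hs
    exact locont.continuousAt (Icc_mem_nhds (by linarith [hs.1]) (by linarith [hs.2]))
  -- reduction
  have hred : ∀ x : ℝ, ∃ k : ℤ, x - (k : ℝ) * θt ∈ Set.Ico (0 : ℝ) θt := by
    intro x
    exact ⟨⌊x / θt⌋, Int.sub_floor_div_mul_nonneg x hθpos, Int.sub_floor_div_mul_lt x hθpos⟩
  have hfun : ∀ k : ℤ, (fun z => y0 (z - (k : ℝ) * θt)) = y0 := by
    intro k
    funext z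
    rw [show z - (k : ℝ) * θt = z + ((-k : ℤ) : ℝ) * θt by push_cast; ring, hshift]
  have hcont : Continuous y0 := by
    rw [continuous_iff_continuousAt]
    intro x
    obtain ⟨k, hk⟩ := hred x
    have h1' : ContinuousAt y0 (x - (k : ℝ) * θt) := hctAt _ hk
    have hf : ContinuousAt (fun z : ℝ => z - (k : ℝ) * θt) x :=
      continuousAt_id.sub continuousAt_const
    have h2' : ContinuousAt (y0 ∘ fun z : ℝ => z - (k : ℝ) * θt) x :=
      ContinuousAt.comp (f := fun z : ℝ => z - (k : ℝ) * θt) h1' hf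
    rw [← hfun k]
    exact h2'
  -- derivative shift transfer
  have hDshift : ∀ (x d : ℝ) (k : ℤ), HasDerivAt y0 d (x - (k : ℝ) * θt) → HasDerivAt y0 d x := by
    intro x d k h
    have hi : HasDerivAt (fun z : ℝ => z - (k : ℝ) * θt) 1 x := (hasDerivAt_id x).sub_const _
    have h2' : HasDerivAt (fun z => y0 (z - (k : ℝ) * θt)) d x := by
      have h3 := HasDerivAt.comp x h hi
      rw [mul_one] at h3
      exact h3
    rwa [hfun k] at h2'
  -- local affine derivative
  have haff : ∀ (lo hi c b s : ℝ), s ∈ Set.Ioo lo hi →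
      (∀ x ∈ Set.Icc lo hi, y0 x = c * x + b) → HasDerivAt y0 c s := by
    intro lo hi c b s hs heq
    have h0 : HasDerivAt (fun x => c * x + b) c s := by
      simpa using ((hasDerivAt_id s).const_mul c).add_const b
    refine h0.congr_of_eventuallyEq ?_
    filter_upwards [Ioo_mem_nhds hs.1 hs.2] with x hx
    exact heq x ⟨hx.1.le, hx.2.le⟩
  -- the derivative statement
  have hderiv : ∀ t : ℝ, (∀ k : ℤ, t ≠ 1 - θt + (k : ℝ) * θt ∧ t ≠ 1 - τt + (k : ℝ) * θt) →
      HasDerivAt y0 (R a (y0 (t - 1))) t := by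
    intro t hk
    obtain ⟨k, hs⟩ := hred t
    set s := t - (k : ℝ) * θt with hsdef
    have ht : t = s + (k : ℝ) * θt := by rw [hsdef]; ring
    have hs0 : 0 ≤ s := hs.1
    have hsθ : s < θt := hs.2
    have hs1 : s ≠ 1 - θt := by
      intro h
      exact (hk k).1 (by rw [ht, h])
    have hs2 : s ≠ 1 - τt := by
      intro h
      exact (hk k).2 (by rw [ht, h])
    rcases lt_trichotomy s (1 - θt) with hc1 | hc1 | hc1
    · -- piece a : slope 1, y0(t-1) ≤ 0
      have hu : y0 (t - 1) = y0 (s + 2 * θt - 1) := by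
        rw [show t - 1 = (s + 2 * θt - 1) + ((k - 2 : ℤ) : ℝ) * θt by rw [ht]; push_cast; ring,
          hshift]
      have huval : y0 (s + 2 * θt - 1) ≤ 0 := by
        rcases le_or_gt (s + 2 * θt - 1) (1 - τt) with h | h
        · rw [hy0b _ ⟨by linarith, h⟩]
          have hnn := mul_nonneg ha.le (sub_nonneg.mpr (show (1 - θt) * t0 ≤ s + 2 * θt - 1 by linarith))
          linarith
        · rw [hy0c _ ⟨h.le, by linarith⟩]; linarith
      have hR : R a (y0 (t - 1)) = 1 := by rw [hu]; simp [R, huval]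
      rw [hR]
      apply hDshift t 1 k
      exact haff (1 - τt - θt) (1 - θt) 1 0 s ⟨by linarith, hc1⟩
        (fun x hx => by rw [hy0a' x hx]; ring)
    · exact absurd hc1 hs1
    · rcases lt_trichotomy s (1 - τt) with hc2 | hc2 | hc2
      · -- piece b : slope -a, y0(t-1) > 0
        have hu : y0 (t - 1) = y0 (s + θt - 1) := by
          rw [show t - 1 = (s + θt - 1) + ((k - 1 : ℤ) : ℝ) * θt by rw [ht]; push_cast; ring,
            hshift]
        have hupos : 0 < y0 (s + θt - 1) := by
          rcases le_or_gt (s + θt - 1) (1 - θt) with h | h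
          · rw [hy0a _ ⟨by linarith, h⟩]; linarith
          · rw [hy0b _ ⟨h.le, by linarith⟩]
            have hlt : s + θt - 1 < (1 - θt) * t0 := by rw [← l3]; linarith
            have hpp := mul_pos ha (sub_pos.mpr hlt)
            linarith
        have hR : R a (y0 (t - 1)) = -a := by
          rw [hu]; simp [R, not_le.mpr hupos]
        rw [hR]
        apply hDshift t (-a) k
        exact haff (1 - θt) (1 - τt) (-a) (a * ((1 - θt) * t0)) s ⟨hc1, hc2⟩
          (fun x hx => by rw [hy0b x hx]; ring)
      · exact absurd hc2 hs2
      · -- piece c : slope 1, y0(t-1) ≤ 0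
        have hu : y0 (t - 1) = y0 (s + θt - 1) := by
          rw [show t - 1 = (s + θt - 1) + ((k - 1 : ℤ) : ℝ) * θt by rw [ht]; push_cast; ring,
            hshift]
        have huval : y0 (s + θt - 1) ≤ 0 := by
          rcases le_or_gt (s + θt - 1) (1 - τt) with h | h
          · rw [hy0b _ ⟨by linarith, h⟩]
            have hge : (1 - θt) * t0 ≤ s + θt - 1 := by rw [← l3]; linarith
            have hnn := mul_nonneg ha.le (sub_nonneg.mpr hge)
            linarith
          · rw [hy0c _ ⟨h.le, by linarith⟩]; linarith
        have hR : R a (y0 (t - 1)) = 1 := by rw [hu]; simp [R, huval]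
        rw [hR]
        apply hDshift t 1 k
        exact haff (1 - τt) 1 1 (-θt) s ⟨hc2, by linarith⟩
          (fun x hx => by rw [hy0c' x hx]; ring)
  exact ⟨⟨h1, h2, h3, h4⟩, hcont, hy0per, hderiv, h4⟩
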